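/- Let ℓ,k ∈ ℤ with ℓ ≠ 0 and ℓ dividing k−1, let m ∈ ℕ and L ∈ ℕ. Then for every finite coloring ℤ = C_1 ∪ … ∪ C_r there exist a color C_i and integers a_0, a_1, …, a_m ∈ C_i with ℓa_j + k ∉ {0, 1, −1} for all j, such that for every j = 1,…,m and all n_0,…,n_{j−1} ∈ {0,1,…,L} one has (1/ℓ)·((ℓa_j + k)·∏_{s=0}^{j−1} (ℓa_s + k)^{n_s} − k) ∈ C_i. -/

import Mathlib

open Finset

lemma vdw_uniform (κ : Type) [Finite κ] (T : ℕ) :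
    ∃ N : ℕ, ∀ χ : ℕ → κ, ∃ a b : ℕ, 0 < a ∧ a ≤ N ∧ b ≤ N ∧
      ∃ c, ∀ s ≤ T, χ (a * s + b) = c := by
  classical
  obtain ⟨ι, _inst, hι⟩ := Combinatorics.Line.exists_mono_in_high_dimension (Fin (T+1)) κ
  refine ⟨Fintype.card ι * (T + 1), fun χ => ?_⟩
  obtain ⟨l, c, hl⟩ := hι fun v => χ (∑ i, (v i : ℕ))
  set s : Finset ι := Finset.univ.filter (fun i => l.idxFun i = none) with hs
  refine ⟨s.card, ∑ i ∈ sᶜ, ((l.idxFun i).map Fin.val).getD 0,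
    Finset.card_pos.mpr ⟨l.proper.choose, by
      rw [hs, Finset.mem_filter]; exact ⟨Finset.mem_univ _, l.proper.choose_spec⟩⟩,
    ?_, ?_, c, ?_⟩
  · calc s.card ≤ Fintype.card ι := Finset.card_le_univ s
      _ ≤ Fintype.card ι * (T + 1) := Nat.le_mul_of_pos_right _ (by omega)
  · calc ∑ i ∈ sᶜ, ((l.idxFun i).map Fin.val).getD 0
        ≤ ∑ _i ∈ sᶜ, T := Finset.sum_le_sum (fun i _ => by
          cases h : l.idxFun i with
          | none => simp
          | some y => simp only [h, Option.map_some, Option.getD_some]; omega)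
      _ = sᶜ.card * T := by rw [Finset.sum_const, smul_eq_mul]
      _ ≤ Fintype.card ι * (T + 1) := by
          have := Finset.card_le_univ sᶜ
          nlinarith
  intro x hx
  rw [← hl ⟨x, by omega⟩]
  congr 1
  rw [← Finset.sum_add_sum_compl s]
  congr 1
  · symm
    calc (∑ i ∈ s, (((l.idxFun i).getD ⟨x, by omega⟩ : Fin (T+1)) : ℕ))
        = ∑ _i ∈ s, x := Finset.sum_congr rfl (fun i hi => by
          rw [hs, Finset.mem_filter] at hi
          rw [hi.2]; rfl)
      _ = s.card * x := by rw [Finset.sum_const, smul_eq_mul]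
  · apply Finset.sum_congr rfl
    intro i hi
    rw [hs, Finset.compl_filter, Finset.mem_filter] at hi
    obtain ⟨y, hy⟩ := Option.ne_none_iff_exists.mp hi.right
    simp_rw [← hy, Option.map_some, Option.getD]
    rw [Combinatorics.Line.apply_some hy.symm]

lemma deuber_aux (κ : Type) [Finite κ] (L : ℕ) :
    ∀ m : ℕ, ∃ B : ℕ, 1 ≤ B ∧ ∀ χ : ℕ → κ, ∃ e : ℕ → ℕ, ∃ c : ℕ → κ,
      (∀ j ≤ m, 1 ≤ e j ∧ e j ≤ B) ∧
      ∀ j ≤ m, ∀ n : ℕ → ℕ, (∀ s < j, n s ≤ L) →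
        χ (e j + ∑ s ∈ Finset.range j, n s * e s) = c j := by
  intro m
  induction m with
  | zero =>
    refine ⟨1, le_refl 1, fun χ => ⟨fun _ => 1, fun _ => χ 1, ?_, ?_⟩⟩
    · intro j hj; exact ⟨le_refl 1, le_refl 1⟩
    · intro j hj n hn
      interval_cases j
      simp
  | succ m ih =>
    obtain ⟨B, hB1, hB⟩ := ih
    obtain ⟨N, hN⟩ := vdw_uniform κ (L * ((m + 1) * B))
    refine ⟨max (N * B) (N + 1), le_max_of_le_right (by omega), fun χ => ?_⟩
    obtain ⟨a, b, ha, haN, hbN, ctop, htop⟩ := hN (fun x => χ (x + 1))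
    obtain ⟨e0, c0, he0, hmain0⟩ := hB (fun y => χ (a * y))
    refine ⟨fun j => if j ≤ m then a * e0 j else b + 1,
            fun j => if j ≤ m then c0 j else ctop, ?_, ?_⟩
    · intro j hj
      by_cases h : j ≤ m
      · have := he0 j h
        simp only [h, if_pos]
        constructor
        · nlinarith
        · calc a * e0 j ≤ N * B := Nat.mul_le_mul haN this.2
            _ ≤ max (N * B) (N + 1) := le_max_left _ _
      · simp only [if_neg h]
        exact ⟨by omega, le_max_of_le_right (by omega)⟩
    · intro j hj n hn
      by_cases h : j ≤ m
      · have hsum : ∑ s ∈ Finset.range j, n s * (if s ≤ m then a * e0 s else b + 1)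
            = a * ∑ s ∈ Finset.range j, n s * e0 s := by
          rw [Finset.mul_sum]
          apply Finset.sum_congr rfl
          intro s hs
          rw [Finset.mem_range] at hs
          have : s ≤ m := by omega
          simp only [this, if_pos]
          ring
        simp only [if_pos h]
        rw [hsum, ← Nat.mul_add]
        exact hmain0 j h n hn
      · have hj' : j = m + 1 := by omega
        subst hj'
        have hsum : ∑ s ∈ Finset.range (m+1), n s * (if s ≤ m then a * e0 s else b + 1)
            = a * ∑ s ∈ Finset.range (m+1), n s * e0 s := by
          rw [Finset.mul_sum]
          apply Finset.sum_congr rfl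
          intro s hs
          rw [Finset.mem_range] at hs
          have : s ≤ m := by omega
          simp only [this, if_pos]
          ring
        simp only [if_neg h]
        rw [hsum]
        have hbound : ∑ s ∈ Finset.range (m+1), n s * e0 s ≤ L * ((m + 1) * B) := by
          calc ∑ s ∈ Finset.range (m+1), n s * e0 s
              ≤ ∑ _s ∈ Finset.range (m+1), L * B := Finset.sum_le_sum (fun s hs => by
                rw [Finset.mem_range] at hs
                exact Nat.mul_le_mul (hn s hs) ((he0 s (by omega)).2))
            _ = (m + 1) * (L * B) := by rw [Finset.sum_const, smul_eq_mul, Finset.card_range]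
            _ = L * ((m + 1) * B) := by ring
        have := htop _ hbound
        have harith : b + 1 + a * ∑ s ∈ Finset.range (m+1), n s * e0 s
            = a * (∑ s ∈ Finset.range (m+1), n s * e0 s) + b + 1 := by ring
        rw [harith]
        exact this

lemma deuber_mono (κ : Type) [Fintype κ] (L m : ℕ) (χ : ℕ → κ) :
    ∃ (c : κ) (e : ℕ → ℕ), (∀ j ≤ m, 1 ≤ e j) ∧
      ∀ j ≤ m, ∀ n : ℕ → ℕ, (∀ s < j, n s ≤ L) →
        χ (e j + ∑ s ∈ Finset.range j, n s * e s) = c := by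
  classical
  set r := Fintype.card κ with hr
  obtain ⟨B, hB1, h⟩ := deuber_aux κ L (m * r)
  obtain ⟨e, c, he, hmain⟩ := h χ
  have hpig : ∃ y ∈ (Finset.univ : Finset κ),
      m < ((Finset.range (m * r + 1)).filter (fun j => c j = y)).card := by
    apply Finset.exists_lt_card_fiber_of_mul_lt_card_of_maps_to
    · intro a _; exact Finset.mem_univ _
    · rw [Finset.card_range, Finset.card_univ, ← hr]
      nlinarith
  obtain ⟨y, _, hy⟩ := hpig
  obtain ⟨T, hTsub, hTcard⟩ := Finset.exists_subset_card_eq (n := m + 1) hy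
  set jemb := T.orderEmbOfFin hTcard with hjemb
  set jf : ℕ → ℕ := fun s => jemb ⟨min s m, by omega⟩ with hjf
  have hjmem : ∀ s, jf s ∈ T := fun s => Finset.orderEmbOfFin_mem T hTcard _
  have hjfilter : ∀ s, c (jf s) = y ∧ jf s ≤ m * r := by
    intro s
    have := hTsub (hjmem s)
    rw [Finset.mem_filter, Finset.mem_range] at this
    exact ⟨this.2, by omega⟩
  have hjmono : ∀ s t, s < t → t ≤ m → jf s < jf t := by
    intro s t hst htm
    apply (T.orderEmbOfFin hTcard).strictMono
    simp only [Fin.mk_lt_mk]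
    omega
  refine ⟨y, fun t => e (jf t), fun t _ => (he _ (hjfilter t).2).1, ?_⟩
  intro j hj n hn
  set n' : ℕ → ℕ := fun x => ∑ s ∈ (Finset.range j).filter (fun s => jf s = x), n s with hn'
  have hinj : ∀ x, ((Finset.range j).filter (fun s => jf s = x)).card ≤ 1 := by
    intro x
    apply Finset.card_le_one.mpr
    intro s1 hs1 s2 hs2
    rw [Finset.mem_filter, Finset.mem_range] at hs1 hs2
    by_contra hne
    rcases Nat.lt_or_ge s1 s2 with hlt | hge
    · have := hjmono s1 s2 hlt (by omega); omega
    · have : s2 < s1 := by omega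
      have := hjmono s2 s1 this (by omega); omega
  have hn'le : ∀ x, n' x ≤ L := by
    intro x
    calc n' x ≤ ((Finset.range j).filter (fun s => jf s = x)).card • L :=
          Finset.sum_le_card_nsmul _ _ _ (fun s hs => by
            rw [Finset.mem_filter, Finset.mem_range] at hs
            exact hn s hs.1)
      _ ≤ 1 * L := by
          rw [smul_eq_mul]
          exact Nat.mul_le_mul_right _ (hinj x)
      _ = L := one_mul L
  have hsum : ∑ x ∈ Finset.range (jf j), n' x * e x = ∑ s ∈ Finset.range j, n s * e (jf s) := by
    have hmaps : ∀ s ∈ Finset.range j, jf s ∈ Finset.range (jf j) := by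
      intro s hs
      rw [Finset.mem_range] at hs ⊢
      exact hjmono s j hs hj
    conv_rhs => rw [← Finset.sum_fiberwise_of_maps_to hmaps (fun s => n s * e (jf s))]
    apply Finset.sum_congr rfl
    intro x _
    rw [hn', Finset.sum_mul]
    apply Finset.sum_congr rfl
    intro s hs
    rw [Finset.mem_filter] at hs
    rw [hs.2]
  have := hmain (jf j) (hjfilter j).2 n' (fun s _ => hn'le s)
  rw [hsum] at this
  rw [this]
  exact (hjfilter j).1

/-- Deuber-type theorem for ⋆_{ℓ,k} on ℤ. Let ℓ,k ∈ ℤ with ℓ ≠ 0 and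
ℓ ∣ k−1, and let m, L ≥ 1. For every finite coloring of ℤ there are a color C i and
integers a₀,…,a_m ∈ C i with ℓa_j + k ∉ {0,1,−1}, such that for every j = 1,…,m and all
n₀,…,n_{j−1} ∈ {0,…,L}, (1/ℓ)·((ℓa_j+k)·∏_{s<j}(ℓa_s+k)^{n_s} − k) ∈ C i. -/
theorem deuber_type_int (l k : ℤ) (hl : l ≠ 0) (hdvd : l ∣ (k - 1)) (m L : ℕ)
    (hm : 0 < m) (hL : 0 < L) (r : ℕ) (C : Fin r → Set ℤ)
    (hC : (⋃ i, C i) = (Set.univ : Set ℤ)) :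
    ∃ (i : Fin r) (a : ℕ → ℤ),
      (∀ j ≤ m, a j ∈ C i) ∧
      (∀ j ≤ m, l * a j + k ≠ 0 ∧ l * a j + k ≠ 1 ∧ l * a j + k ≠ -1) ∧
      (∀ j : ℕ, 1 ≤ j → j ≤ m → ∀ n : ℕ → ℕ, (∀ s < j, n s ≤ L) →
        ((l * a j + k) * (∏ s ∈ Finset.range j, (l * a s + k) ^ n s) - k) / l ∈ C i) := by
  classical
  have hD : ∀ z : ℤ, ∃ i, z ∈ C i := by
    intro z
    have : z ∈ (⋃ i, C i) := by rw [hC]; exact Set.mem_univ z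
    exact Set.mem_iUnion.mp this
  choose D hDspec using hD
  have hl2 : (1 : ℤ) ≤ l ^ 2 := by
    have h0 : 0 < l ^ 2 := by positivity
    omega
  set M : ℤ := max (2 - k) 0 with hM
  set t : ℤ := k + l ^ 2 * M with ht
  have hM0 : 0 ≤ M := le_max_right _ _
  have ht2 : 2 ≤ t := by
    have h1 : M ≤ l ^ 2 * M := le_mul_of_one_le_left hM0 hl2
    have h2 : 2 - k ≤ M := le_max_left _ _
    omega
  have hmod : ∀ E : ℕ, l ∣ t ^ E - k := by
    intro E
    have h1 : t ≡ 1 [ZMOD l] := by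
      rw [Int.modEq_iff_dvd]
      have h : 1 - t = -((k - 1) + l * (l * M)) := by rw [ht]; ring
      rw [h]
      exact dvd_neg.mpr (dvd_add hdvd ⟨l * M, rfl⟩)
    have hk1 : (1 : ℤ) ≡ k [ZMOD l] := by
      rw [Int.modEq_iff_dvd]
      exact hdvd
    have h2 : t ^ E ≡ k [ZMOD l] := by
      calc t ^ E ≡ 1 ^ E [ZMOD l] := h1.pow E
        _ = 1 := one_pow E
        _ ≡ k [ZMOD l] := hk1
    have := h2.dvd
    rwa [← dvd_neg, neg_sub] at this
  have key : ∀ E : ℕ, l * ((t ^ E - k) / l) + k = t ^ E := by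
    intro E
    rw [Int.mul_ediv_cancel' (hmod E)]
    ring
  have : Nonempty (Fin r) := ⟨D 0⟩
  set χ : ℕ → Fin r := fun x => D ((t ^ x - k) / l) with hχ
  obtain ⟨i, e, he1, hmono⟩ := deuber_mono (Fin r) L m χ
  set a : ℕ → ℤ := fun j => (t ^ (e j) - k) / l with ha
  have hcolor : ∀ j ≤ m, ∀ n : ℕ → ℕ, (∀ s < j, n s ≤ L) →
      D ((t ^ (e j + ∑ s ∈ Finset.range j, n s * e s) - k) / l) = i := fun j hj n hn =>
    hmono j hj n hn
  have hak : ∀ j, l * a j + k = t ^ (e j) := fun j => key (e j)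
  refine ⟨i, a, ?_, ?_, ?_⟩
  · intro j hj
    have h0 : D ((t ^ (e j + ∑ s ∈ Finset.range j, (fun _ => 0) s * e s) - k) / l) = i :=
      hcolor j hj (fun _ => 0) (fun s _ => Nat.zero_le L)
    simp only [Nat.zero_mul, Finset.sum_const_zero, Nat.add_zero] at h0
    have := hDspec ((t ^ (e j) - k) / l)
    rw [h0] at this
    exact this
  · intro j hj
    have h1 : 1 < t ^ (e j) := one_lt_pow₀ (by omega) (by have := he1 j hj; omega)
    rw [hak j]
    omega
  · intro j hj1 hj2 n hn
    have hprod : ∏ s ∈ Finset.range j, (l * a s + k) ^ n s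
        = t ^ (∑ s ∈ Finset.range j, n s * e s) := by
      rw [← Finset.prod_pow_eq_pow_sum]
      apply Finset.prod_congr rfl
      intro s _
      rw [hak s, ← pow_mul, Nat.mul_comm]
    rw [hprod, hak j, ← pow_add]
    have h0 := hcolor j hj2 n hn
    have := hDspec ((t ^ (e j + ∑ s ∈ Finset.range j, n s * e s) - k) / l)
    rw [h0] at this
    exact this
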